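/- Let E_t := 4·√(t(1−t)/(2π)). For every integer k ≥ 1 there exists a constant c_k > 0, depending only on k, such that the following holds: for all constants C, D > 0, every probability space (Ω, P) and every jointly measurable nonnegative process X : (0,1) × Ω → ℝ satisfying P(X(t,·) > x) ≤ (C/t)·exp(−D·x/√t) for all t ∈ (0,1) and all x > 0, one has E[ ( ∫₀¹ X(t, ·) · E_t dt )^k ] ≤ c_k · C · k! / D^k. In particular all moments of the least-square statistic λ̂[τ_n] of a conditioned Galton-Watson tree are bounded uniformly in n. -/

import Mathlib

open MeasureTheory Set ENNReal

-- helper: ofReal of integral ≤ lintegral of ofReal, unconditionally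
lemma my_ofReal_integral_le {α : Type*} [MeasurableSpace α] (μ : Measure α) (f : α → ℝ)
    (hf : ∀ x, 0 ≤ f x) :
    ENNReal.ofReal (∫ x, f x ∂μ) ≤ ∫⁻ x, ENNReal.ofReal (f x) ∂μ := by
  by_cases hint : Integrable f μ
  · rw [← ofReal_integral_eq_lintegral_ofReal hint (ae_of_all _ hf)]
  · rw [integral_undef hint]; simp

-- helper: Jensen via Hölder
lemma my_jensen {α : Type*} [MeasurableSpace α] (μ : Measure α) (hμ : μ Set.univ ≤ 1)
    (f : α → ℝ≥0∞) (hf : AEMeasurable f μ) (k : ℕ) (hk : 1 ≤ k) :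
    (∫⁻ x, f x ∂μ) ^ k ≤ ∫⁻ x, f x ^ k ∂μ := by
  rcases eq_or_lt_of_le hk with h1 | h2
  · simp [← h1]
  · have hk2 : (1:ℝ) < (k:ℝ) := by exact_mod_cast h2
    have hpq : Real.HolderConjugate (k:ℝ) (Real.conjExponent (k:ℝ)) :=
      Real.HolderConjugate.conjExponent hk2
    have H := ENNReal.lintegral_mul_le_Lp_mul_Lq μ hpq hf aemeasurable_const (g := fun _ => 1)
    simp only [mul_one, ENNReal.one_rpow, lintegral_one] at H
    have h2' : (μ Set.univ) ^ (Real.conjExponent (k:ℝ))⁻¹ ≤ 1 :=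
      ENNReal.rpow_le_one hμ (by rw [inv_nonneg]; exact hpq.symm.nonneg)
    simp only [one_div] at H
    have H2 : ∫⁻ x, f x ∂μ ≤ (∫⁻ x, f x ^ (k:ℝ) ∂μ) ^ ((k:ℝ))⁻¹ := by
      refine le_trans (le_of_eq ?_) (H.trans (mul_le_of_le_one_right zero_le h2'))
      simp
    calc (∫⁻ x, f x ∂μ) ^ k ≤ ((∫⁻ x, f x ^ (k:ℝ) ∂μ) ^ ((k:ℝ))⁻¹) ^ k :=
          pow_le_pow_left' H2 k
      _ = ∫⁻ x, f x ^ k ∂μ := by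
          rw [← ENNReal.rpow_natCast (((∫⁻ x, f x ^ (k:ℝ) ∂μ) ^ ((k:ℝ))⁻¹)) k,
            ← ENNReal.rpow_mul, inv_mul_cancel₀ (by positivity : (k:ℝ) ≠ 0), ENNReal.rpow_one]
          congr 1; ext x; rw [← ENNReal.rpow_natCast]

lemma my_moment_bound {Ω : Type} [MeasurableSpace Ω] (P : Measure Ω) [IsProbabilityMeasure P]
    (k : ℕ) (hk : 1 ≤ k) (C D t : ℝ) (hC : 0 < C) (hD : 0 < D) (ht : t ∈ Set.Ioo (0:ℝ) 1)
    (f : Ω → ℝ) (hf : Measurable f) (hf0 : ∀ ω, 0 ≤ f ω)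
    (htail : ∀ x : ℝ, 0 < x →
      (P {ω | f ω > x}).toReal ≤ (C / t) * Real.exp (-D * x / Real.sqrt t)) :
    ∫⁻ ω, (ENNReal.ofReal (f ω)) ^ k ∂P ≤
      ENNReal.ofReal ((k.factorial : ℝ) * C / D ^ k) * ENNReal.ofReal (t ^ ((k:ℝ)/2 - 1)) := by
  have ht0 : 0 < t := ht.1
  have hst : 0 < Real.sqrt t := Real.sqrt_pos.2 ht0
  set b : ℝ := D / Real.sqrt t with hb_def
  have hb : 0 < b := div_pos hD hst
  have hkR : (0:ℝ) < (k:ℝ) := by exact_mod_cast hk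
  -- step 1: rewrite lhs via layer cake
  have h1 : ∀ ω, (ENNReal.ofReal (f ω)) ^ k = ENNReal.ofReal (f ω ^ ((k:ℝ))) := by
    intro ω
    rw [← ENNReal.ofReal_pow (hf0 ω), Real.rpow_natCast]
  simp_rw [h1]
  rw [lintegral_rpow_eq_lintegral_meas_lt_mul P (ae_of_all _ hf0) hf.aemeasurable hkR]
  -- step 2: bound the tail integral
  have h2 : ∫⁻ x in Ioi (0:ℝ), P {a | x < f a} * ENNReal.ofReal (x ^ ((k:ℝ) - 1)) ≤
      ∫⁻ x in Ioi (0:ℝ), ENNReal.ofReal ((C / t) * Real.exp (-(b * x)) * x ^ ((k:ℝ) - 1)) := by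
    refine setLIntegral_mono' measurableSet_Ioi (fun x hx => ?_)
    rw [ENNReal.ofReal_mul (by positivity)]
    gcongr
    have hPne : P {a | x < f a} ≠ ⊤ := measure_ne_top P _
    rw [← ENNReal.ofReal_toReal hPne]
    refine ENNReal.ofReal_le_ofReal ?_
    have := htail x hx
    convert this using 2
    rw [hb_def]; ring
  -- step 3: compute the exponential integral
  have hint : IntegrableOn (fun x : ℝ => x ^ ((k:ℝ) - 1) * Real.exp (-(b * x))) (Ioi 0) := by
    have := integrableOn_rpow_mul_exp_neg_mul_rpow
      (s := (k:ℝ) - 1) (p := 1) (b := b) (by linarith) zero_lt_one hb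
    refine this.congr_fun (fun x hx => ?_) measurableSet_Ioi
    dsimp only
    rw [Real.rpow_one, neg_mul]
  have h3 : ∫⁻ x in Ioi (0:ℝ), ENNReal.ofReal ((C / t) * Real.exp (-(b * x)) * x ^ ((k:ℝ) - 1))
      = ENNReal.ofReal ((C / t) * ((1 / b) ^ ((k:ℝ)) * Real.Gamma (k:ℝ))) := by
    rw [← ofReal_integral_eq_lintegral_ofReal]
    · congr 1
      have : ∀ x : ℝ, (C / t) * Real.exp (-(b * x)) * x ^ ((k:ℝ) - 1)
          = (C / t) * (x ^ ((k:ℝ) - 1) * Real.exp (-(b * x))) := fun x => by ring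
      simp_rw [this, integral_const_mul,
        Real.integral_rpow_mul_exp_neg_mul_Ioi hkR hb]
    · have h' : IntegrableOn (fun x : ℝ => (C / t) * (x ^ ((k:ℝ) - 1) * Real.exp (-(b * x))))
          (Ioi 0) := hint.const_mul _
      exact h'.congr_fun (fun x hx => by ring) measurableSet_Ioi
    · refine ae_restrict_of_forall_mem measurableSet_Ioi (fun x hx => ?_)
      have : (0:ℝ) < x := hx
      positivity
  -- step 4: Gamma value and real arithmetic
  have hGamma : Real.Gamma (k:ℝ) = ((k-1).factorial : ℝ) := by
    have h := Real.Gamma_nat_eq_factorial (k-1)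
    have hcast : ((k-1:ℕ):ℝ) + 1 = (k:ℝ) := by
      have := Nat.sub_add_cancel hk
      exact_mod_cast congrArg (Nat.cast (R := ℝ)) this
    rwa [hcast] at h
  have hreal : (k:ℝ) * ((C / t) * ((1 / b) ^ ((k:ℝ)) * ((k-1).factorial : ℝ)))
      = ((k.factorial : ℝ) * C / D ^ k) * t ^ ((k:ℝ)/2 - 1) := by
    have h1b : (1 / b) ^ ((k:ℝ)) = t ^ ((k:ℝ)/2) / D ^ k := by
      rw [hb_def, one_div, inv_div, Real.div_rpow (Real.sqrt_nonneg t) hD.le,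
        Real.sqrt_eq_rpow, ← Real.rpow_mul ht0.le, Real.rpow_natCast D k]
      congr 1
      ring
    have h2t : t ^ ((k:ℝ)/2 - 1) = t ^ ((k:ℝ)/2) / t := by
      rw [Real.rpow_sub ht0, Real.rpow_one]
    have hfact : (k.factorial : ℝ) = (k:ℝ) * ((k-1).factorial : ℝ) := by
      have := Nat.mul_factorial_pred (Nat.lt_of_lt_of_le Nat.zero_lt_one hk).ne'
      exact_mod_cast this.symm
    rw [h1b, h2t, hfact]
    field_simp
  calc ENNReal.ofReal (k:ℝ) * ∫⁻ x in Ioi (0:ℝ), P {a | x < f a} * ENNReal.ofReal (x ^ ((k:ℝ) - 1))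
      ≤ ENNReal.ofReal (k:ℝ) *
        ENNReal.ofReal ((C / t) * ((1 / b) ^ ((k:ℝ)) * Real.Gamma (k:ℝ))) := by
        rw [← h3]; exact mul_le_mul_right h2 _
    _ = ENNReal.ofReal ((k.factorial : ℝ) * C / D ^ k) * ENNReal.ofReal (t ^ ((k:ℝ)/2 - 1)) := by
        rw [← ENNReal.ofReal_mul (by positivity), ← ENNReal.ofReal_mul (by positivity),
          hGamma, hreal]

/-- The mean of the Brownian excursion at time `t`. -/
noncomputable def excMean (t : ℝ) : ℝ := 4 * Real.sqrt (t * (1 - t) / (2 * Real.pi))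

lemma excMean_nonneg (t : ℝ) : 0 ≤ excMean t := by
  unfold excMean; positivity

lemma excMean_continuous : Continuous excMean := by
  unfold excMean
  exact continuous_const.mul (Real.continuous_sqrt.comp (by continuity))

lemma excMean_le_one {t : ℝ} (ht : t ∈ Set.Ioo (0:ℝ) 1) : excMean t ≤ 1 := by
  have hpi := Real.pi_gt_three
  have h1 : t * (1 - t) / (2 * Real.pi) ≤ 1 / 16 := by
    rw [div_le_div_iff₀ (by positivity) (by norm_num)]
    nlinarith [ht.1, ht.2, sq_nonneg (t - 1/2)]
  have h2 : Real.sqrt (t * (1 - t) / (2 * Real.pi)) ≤ Real.sqrt (1 / 16) :=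
    Real.sqrt_le_sqrt h1
  have h3 : Real.sqrt ((1:ℝ) / 16) = 1 / 4 := by
    rw [show (1:ℝ)/16 = (1/4)^2 by norm_num, Real.sqrt_sq (by norm_num)]
  unfold excMean
  rw [h3] at h2
  linarith

lemma excMean_le_sqrt {t : ℝ} (ht : t ∈ Set.Ioo (0:ℝ) 1) : excMean t ≤ 4 * Real.sqrt t := by
  have hpi := Real.pi_gt_three
  have h1 : t * (1 - t) / (2 * Real.pi) ≤ t := by
    rw [div_le_iff₀ (by positivity)]
    nlinarith [ht.1, ht.2]
  unfold excMean
  have := Real.sqrt_le_sqrt h1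
  linarith

lemma excMean_key {t : ℝ} (ht : t ∈ Set.Ioo (0:ℝ) 1) (k : ℕ) (hk : 1 ≤ k) :
    excMean t * t ^ ((k:ℝ)/2 - 1) ≤ 4 := by
  have ht0 := ht.1
  have h1 := excMean_le_sqrt ht
  have h2 : Real.sqrt t * t ^ ((k:ℝ)/2 - 1) ≤ 1 := by
    rw [Real.sqrt_eq_rpow, ← Real.rpow_add ht0]
    refine Real.rpow_le_one ht0.le ht.2.le ?_
    have : (1:ℝ) ≤ (k:ℝ) := by exact_mod_cast hk
    linarith
  have hpow : (0:ℝ) ≤ t ^ ((k:ℝ)/2 - 1) := Real.rpow_nonneg ht0.le _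
  calc excMean t * t ^ ((k:ℝ)/2 - 1) ≤ 4 * Real.sqrt t * t ^ ((k:ℝ)/2 - 1) := by
        exact mul_le_mul_of_nonneg_right h1 hpow
    _ = 4 * (Real.sqrt t * t ^ ((k:ℝ)/2 - 1)) := by ring
    _ ≤ 4 * 1 := by linarith [mul_le_mul_of_nonneg_left h2 (by norm_num : (0:ℝ) ≤ 4)]
    _ = 4 := by norm_num

theorem stmt_14 (k : ℕ) (hk : 1 ≤ k) :
    ∃ c : ℝ, 0 < c ∧
      ∀ (Ω : Type) (_ : MeasurableSpace Ω) (P : Measure Ω), IsProbabilityMeasure P →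
      ∀ C D : ℝ, 0 < C → 0 < D →
      ∀ X : ℝ → Ω → ℝ, Measurable (fun p : ℝ × Ω => X p.1 p.2) →
      (∀ t ω, 0 ≤ X t ω) →
      (∀ t ∈ Set.Ioo (0 : ℝ) 1, ∀ x : ℝ, 0 < x →
        (P {ω | X t ω > x}).toReal ≤ (C / t) * Real.exp (-D * x / Real.sqrt t)) →
      ∫ ω, (∫ t in (0 : ℝ)..1, X t ω * excMean t) ^ k ∂P ≤
        c * C * (Nat.factorial k : ℝ) / D ^ k := by
  refine ⟨4, by norm_num, ?_⟩
  intro Ω mΩ P hP C D hC hD X hXmeas hX0 htail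
  have hE_meas : Measurable excMean := excMean_continuous.measurable
  set ν : Measure ℝ := volume.restrict (Set.Ioo (0:ℝ) 1) with hν
  set g : Ω → ℝ := fun ω => ∫ t in (0:ℝ)..1, X t ω * excMean t with hg
  have hg_eq : ∀ ω, g ω = ∫ t, X t ω * excMean t ∂ν := by
    intro ω
    rw [hg]
    simp only
    rw [intervalIntegral.integral_of_le zero_le_one, integral_Ioc_eq_integral_Ioo, hν]
  have hg0 : ∀ ω, 0 ≤ g ω := by
    intro ω
    refine intervalIntegral.integral_nonneg zero_le_one (fun t _ => ?_)
    exact mul_nonneg (hX0 t ω) (excMean_nonneg t)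
  -- measurability of g
  have hF : StronglyMeasurable (fun p : Ω × ℝ => X p.2 p.1 * excMean p.2) :=
    ((hXmeas.comp (measurable_snd.prodMk measurable_fst)).mul
      (hE_meas.comp measurable_snd)).stronglyMeasurable
  have hg_meas : Measurable g := by
    have := hF.integral_prod_right' (ν := ν)
    have h2 : (fun ω => ∫ t, X t ω * excMean t ∂ν) = g := by
      ext ω; rw [hg_eq ω]
    rw [← h2]
    exact this.measurable
  -- section measurability
  have hXsec : ∀ ω, Measurable (fun t => X t ω) := fun ω =>
    hXmeas.comp (measurable_id.prodMk measurable_const)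
  have hXsec' : ∀ t, Measurable (fun ω => X t ω) := fun t =>
    hXmeas.comp (measurable_const.prodMk measurable_id)
  -- the weighted measure
  set μE : Measure ℝ := ν.withDensity (fun t => ENNReal.ofReal (excMean t)) with hμE_def
  have hμE : μE Set.univ ≤ 1 := by
    rw [hμE_def, withDensity_apply _ MeasurableSet.univ, Measure.restrict_univ, hν]
    calc ∫⁻ t in Set.Ioo (0:ℝ) 1, ENNReal.ofReal (excMean t) ≤
        ∫⁻ _ in Set.Ioo (0:ℝ) 1, 1 := by
          refine setLIntegral_mono' measurableSet_Ioo (fun t ht => ?_)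
          exact ENNReal.ofReal_le_one.2 (excMean_le_one ht)
      _ = 1 := by rw [setLIntegral_one, Real.volume_Ioo]; norm_num
  -- Step A: pointwise bound
  have stepA : ∀ ω, ENNReal.ofReal (g ω ^ k) ≤
      ∫⁻ t, (ENNReal.ofReal (X t ω)) ^ k ∂μE := by
    intro ω
    have hA1 : ENNReal.ofReal (g ω) ≤ ∫⁻ t, ENNReal.ofReal (X t ω) ∂μE := by
      rw [hg_eq ω]
      refine (my_ofReal_integral_le ν _ (fun t => mul_nonneg (hX0 t ω) (excMean_nonneg t))).trans
        (le_of_eq ?_)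
      rw [hμE_def, lintegral_withDensity_eq_lintegral_mul _ hE_meas.ennreal_ofReal
        (hXsec ω).ennreal_ofReal]
      refine lintegral_congr (fun t => ?_)
      simp only [Pi.mul_apply]
      rw [← ENNReal.ofReal_mul (excMean_nonneg t), mul_comm]
    calc ENNReal.ofReal (g ω ^ k) = (ENNReal.ofReal (g ω)) ^ k :=
          ENNReal.ofReal_pow (hg0 ω) k
      _ ≤ (∫⁻ t, ENNReal.ofReal (X t ω) ∂μE) ^ k := pow_le_pow_left' hA1 k
      _ ≤ ∫⁻ t, (ENNReal.ofReal (X t ω)) ^ k ∂μE :=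
          my_jensen μE hμE _ ((hXsec ω).ennreal_ofReal.aemeasurable) k hk
  -- rewrite μE integrals back to ν
  have stepA' : ∀ ω, ∫⁻ t, (ENNReal.ofReal (X t ω)) ^ k ∂μE =
      ∫⁻ t, ENNReal.ofReal (excMean t) * (ENNReal.ofReal (X t ω)) ^ k ∂ν := by
    intro ω
    rw [hμE_def, lintegral_withDensity_eq_lintegral_mul _ hE_meas.ennreal_ofReal
      ((hXsec ω).ennreal_ofReal.pow_const k)]
    rfl
  -- main chain
  have main : ∫⁻ ω, ENNReal.ofReal (g ω ^ k) ∂P ≤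
      ENNReal.ofReal (4 * C * (Nat.factorial k : ℝ) / D ^ k) := by
    have huncurry : Measurable (Function.uncurry fun (ω : Ω) (t : ℝ) =>
        ENNReal.ofReal (excMean t) * (ENNReal.ofReal (X t ω)) ^ k) := by
      refine Measurable.mul (M := ℝ≥0∞) ?_ ?_
      · exact (hE_meas.comp measurable_snd).ennreal_ofReal
      · exact ((hXmeas.comp (measurable_snd.prodMk measurable_fst)).ennreal_ofReal).pow_const k
    calc ∫⁻ ω, ENNReal.ofReal (g ω ^ k) ∂P
        ≤ ∫⁻ ω, ∫⁻ t, ENNReal.ofReal (excMean t) * (ENNReal.ofReal (X t ω)) ^ k ∂ν ∂P := by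
          refine lintegral_mono (fun ω => ?_)
          rw [← stepA' ω]; exact stepA ω
      _ = ∫⁻ t, ∫⁻ ω, ENNReal.ofReal (excMean t) * (ENNReal.ofReal (X t ω)) ^ k ∂P ∂ν :=
          lintegral_lintegral_swap huncurry.aemeasurable
      _ = ∫⁻ t, ENNReal.ofReal (excMean t) * ∫⁻ ω, (ENNReal.ofReal (X t ω)) ^ k ∂P ∂ν := by
          refine lintegral_congr (fun t => ?_)
          exact lintegral_const_mul _ (((hXsec' t).ennreal_ofReal).pow_const k)
      _ ≤ ∫⁻ _ in Set.Ioo (0:ℝ) 1,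
            ENNReal.ofReal ((Nat.factorial k : ℝ) * C / D ^ k) * ENNReal.ofReal 4 ∂volume := by
          rw [hν]
          refine setLIntegral_mono' measurableSet_Ioo (fun t ht => ?_)
          calc ENNReal.ofReal (excMean t) * ∫⁻ ω, (ENNReal.ofReal (X t ω)) ^ k ∂P
              ≤ ENNReal.ofReal (excMean t) *
                (ENNReal.ofReal ((Nat.factorial k : ℝ) * C / D ^ k) *
                 ENNReal.ofReal (t ^ ((k:ℝ)/2 - 1))) := by
                refine mul_le_mul_right ?_ _
                exact my_moment_bound P k hk C D t hC hD ht (fun ω => X t ω) (hXsec' t)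
                  (fun ω => hX0 t ω) (htail t ht)
            _ = ENNReal.ofReal ((Nat.factorial k : ℝ) * C / D ^ k) *
                (ENNReal.ofReal (excMean t) * ENNReal.ofReal (t ^ ((k:ℝ)/2 - 1))) := by ring
            _ ≤ ENNReal.ofReal ((Nat.factorial k : ℝ) * C / D ^ k) * ENNReal.ofReal 4 := by
                refine mul_le_mul_right ?_ _
                rw [← ENNReal.ofReal_mul (excMean_nonneg t)]
                exact ENNReal.ofReal_le_ofReal (excMean_key ht k hk)
      _ = ENNReal.ofReal (4 * C * (Nat.factorial k : ℝ) / D ^ k) := by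
          rw [setLIntegral_const, Real.volume_Ioo, ← ENNReal.ofReal_mul (by positivity),
            ← ENNReal.ofReal_mul (by positivity)]
          congr 1
          norm_num
          ring
  -- conclude
  rw [show (fun ω => (∫ t in (0:ℝ)..1, X t ω * excMean t) ^ k) = fun ω => g ω ^ k from rfl]
  rw [integral_eq_lintegral_of_nonneg_ae (ae_of_all _ (fun ω => pow_nonneg (hg0 ω) k))
    ((hg_meas.pow_const k).aestronglyMeasurable)]
  refine ENNReal.toReal_le_of_le_ofReal (by positivity) ?_
  exact main
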